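/- arXiv:1702.06556 — 4 statements merged into one kernel-verified Lean document; each statement's English description precedes it below -/
import Mathlib

section
/- Suppose g : 2^ℕ → ℕ has N as a modulus of uniform continuity on Cantor space, i.e. for all f, h ∈ 2^ℕ, f̄N = h̄N implies g(f) = g(h). Let M = max over σ ∈ 2^N of g(σ⌢0^∞). Then for every γ ∈ 2^ℕ, the point β = (γ̄M)⌢0^∞ satisfies γ̄g(β) = β̄g(β); consequently the finite family of cylinders { C_{β̄ g(β)} : β = τ⌢0^∞, τ ∈ 2^M } covers 2^ℕ. -/
/-- The finite binary string `σ` followed by infinitely many zeros. -/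
def extFin {N : ℕ} (σ : Fin N → Bool) : ℕ → Bool :=
  fun i => if h : i < N then σ ⟨i, h⟩ else false

/-- A modulus of uniform continuity for `g` yields an explicit finite cover of
Cantor space: for each `γ`, the point `β = (γ̄M)⌢0^∞` satisfies
`γ̄g(β) = β̄g(β)`, and the cylinders from strings of length `M` padded with
zeros cover Cantor space. -/
theorem cover_from_modulus (g : (ℕ → Bool) → ℕ) (N : ℕ)
    (hN : ∀ f h : ℕ → Bool, (∀ m < N, f m = h m) → g f = g h)
    (M : ℕ) (hM : M = Finset.univ.sup fun σ : Fin N → Bool => g (extFin σ)) :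
    (∀ γ : ℕ → Bool, ∀ m < g (extFin fun i : Fin M => γ i.1),
        γ m = extFin (fun i : Fin M => γ i.1) m) ∧
    (∀ γ : ℕ → Bool, ∃ τ : Fin M → Bool, ∀ m < g (extFin τ), γ m = extFin τ m) := by
  have key : ∀ γ : ℕ → Bool, ∀ m < g (extFin fun i : Fin M => γ i.1),
      γ m = extFin (fun i : Fin M => γ i.1) m := by
    intro γ m hm
    set β : ℕ → Bool := extFin (fun i : Fin M => γ i.1) with hβ
    have hle : g β ≤ M := by
      have h1 : g β = g (extFin (fun i : Fin N => β i.1)) := by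
        apply hN
        intro k hk
        simp [extFin, hk]
      rw [h1, hM]
      exact Finset.le_sup (f := fun σ : Fin N → Bool => g (extFin σ)) (Finset.mem_univ _)
    have hmM : m < M := lt_of_lt_of_le hm hle
    simp [hβ, extFin, hmM]
  refine ⟨key, fun γ => ⟨fun i : Fin M => γ i.1, key γ⟩⟩
end

section
/- If (fₙ)_{n∈ℕ} is a sequence in 2^ℕ that is nondecreasing in the lexicographic order, then it converges pointwise: for every x ∈ ℕ the sequence n ↦ fₙ(x) is eventually constant. -/
/-- Strict lexicographic order on Cantor space. -/
def lexLt (f g : ℕ → Bool) : Prop :=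
  ∃ n, (∀ m < n, f m = g m) ∧ f n = false ∧ g n = true

/-- Lexicographic order on Cantor space. -/
def lexLe (f g : ℕ → Bool) : Prop := f = g ∨ lexLt f g

lemma stable_below (f : ℕ → ℕ → Bool)
    (hmono : ∀ m n : ℕ, m ≤ n → lexLe (f m) (f n)) :
    ∀ x : ℕ, ∃ N : ℕ, ∀ n ≥ N, ∀ y < x, f n y = f N y := by
  intro x
  induction x with
  | zero => exact ⟨0, fun n _ y hy => absurd hy (Nat.not_lt_zero y)⟩
  | succ x ih =>
    obtain ⟨N, hN⟩ := ih
    -- once coordinates < x are frozen, coordinate x is Bool-nondecreasing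
    have mono_x : ∀ m n, N ≤ m → m ≤ n → f m x = true → f n x = true := by
      intro m n hm hmn ht
      rcases hmono m n hmn with heq | ⟨k, hk, hkm, hkn⟩
      · rw [← heq]; exact ht
      · rcases lt_trichotomy k x with h | h | h
        · have h1 : f m k = f N k := hN m hm k h
          have h2 : f n k = f N k := hN n (le_trans hm hmn) k h
          rw [h1] at hkm; rw [h2] at hkn
          rw [hkm] at hkn; exact absurd hkn (by simp)
        · subst h; rw [hkm] at ht; exact absurd ht (by simp)
        · rw [← hk x h]; exact ht
    by_cases hcase : ∃ n ≥ N, f n x = true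
    · obtain ⟨M, hM, hMt⟩ := hcase
      refine ⟨M, fun n hn y hy => ?_⟩
      rcases Nat.lt_succ_iff_lt_or_eq.mp hy with h | h
      · rw [hN n (le_trans hM hn) y h, hN M hM y h]
      · subst h
        rw [hMt, mono_x M n hM hn hMt]
    · push_neg at hcase
      refine ⟨N, fun n hn y hy => ?_⟩
      rcases Nat.lt_succ_iff_lt_or_eq.mp hy with h | h
      · exact hN n hn y h
      · subst h
        have h1 := hcase n hn
        have h2 := hcase N le_rfl
        simp only [Bool.not_eq_true] at h1 h2
        rw [h1, h2]

/-- A lexicographically nondecreasing sequence in Cantor space converges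
pointwise: each coordinate is eventually constant. -/
theorem lex_monotone_pointwise_convergent (f : ℕ → ℕ → Bool)
    (hmono : ∀ m n : ℕ, m ≤ n → lexLe (f m) (f n)) :
    ∀ x : ℕ, ∃ N : ℕ, ∀ n ≥ N, f n x = f N x := by
  intro x
  obtain ⟨N, hN⟩ := stable_below f hmono (x + 1)
  exact ⟨N, fun n hn => hN n hn x (Nat.lt_succ_self x)⟩
end

section
/- Fix h : 2^ℕ → ℕ and an ordinal λ, and suppose (f_α)_{α<λ} is a sequence in 2^ℕ such that for each α < λ the set 2^ℕ ∖ ⋃_{β<α} C_{f̄_β h(f_β)} is nonempty and f_α is its lexicographically least element. Then (f_α)_{α<λ} is strictly increasing in the lexicographic order, and consequently λ is a countable ordinal. -/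
/-- The greedy transfinite construction of a cover of Cantor space: if at each
stage `α < λ` the point `f α` is the lexicographically least point not covered
by the earlier cylinders `C_{f̄_β h(f_β)}`, then the sequence is strictly
increasing in the lexicographic order and `λ` is a countable ordinal. -/
theorem greedy_cover_terminates (h : (ℕ → Bool) → ℕ) (lam : Ordinal)
    (f : Ordinal → ℕ → Bool)
    (hf : ∀ α < lam,
      (∀ β < α, ¬ (∀ m < h (f β), f α m = f β m)) ∧
      (∀ g : ℕ → Bool, (∀ β < α, ¬ (∀ m < h (f β), g m = f β m)) → lexLe (f α) g)) :
    (∀ α β : Ordinal, α < β → β < lam → lexLt (f α) (f β)) ∧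
    lam.card ≤ Cardinal.aleph0 := by
  have main : ∀ α β : Ordinal, α < β → β < lam → lexLt (f α) (f β) := by
    intro α β hab hbl
    have hal : α < lam := hab.trans hbl
    obtain ⟨hC, _⟩ := hf β hbl
    obtain ⟨_, hmin⟩ := hf α hal
    have hle : lexLe (f α) (f β) := by
      refine hmin (f β) ?_
      intro β' hβ' hagr
      exact hC β' (hβ'.trans hab) hagr
    rcases hle with heq | hlt
    · exfalso
      exact hC α hab (by intro m _; rw [heq])
    · exact hlt
  refine ⟨main, ?_⟩
  -- encode each stage α (with α+1 < lam) by the witness of lexLt (f α) (f (α+1))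
  classical
  set enc : Ordinal → Option (List Bool) := fun α =>
    if hα : α + 1 < lam then
      some (List.ofFn (fun i : Fin ((main α (α + 1) (Order.lt_succ α) hα).choose + 1) =>
        f α i))
    else none with henc
  have encinj : ∀ α < lam, ∀ α' < lam, α < α' → enc α ≠ enc α' := by
    intro α hαl α' hα'l hlt' hEq
    simp only [henc] at hEq
    by_cases hα : α + 1 < lam
    · have hα' : α' + 1 < lam := by
        by_contra hc
        -- then α' is the top element; but α + 1 ≤ α', so α + 1 < lam would force enc α' = none ≠ some
        rw [dif_pos hα, dif_neg hc] at hEq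
        cases hEq
      rw [dif_pos hα, dif_pos hα'] at hEq
      obtain ⟨hag, hf0, hf1⟩ := (main α (α + 1) (Order.lt_succ α) hα).choose_spec
      obtain ⟨hag', hf0', hf1'⟩ := (main α' (α' + 1) (Order.lt_succ α') hα').choose_spec
      generalize (main α (α + 1) (Order.lt_succ α) hα).choose = n at hag hf0 hf1 hEq
      generalize (main α' (α' + 1) (Order.lt_succ α') hα').choose = n' at hag' hf0' hf1' hEq
      have hsome := Option.some.inj hEq
      have hlen : n + 1 = n' + 1 := by
        have := congrArg List.length hsome
        simpa using this
      have hnn : n = n' := Nat.succ.inj hlen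
      subst hnn
      have hfun := List.ofFn_injective hsome
      have hpt : ∀ m ≤ n, f α m = f α' m := by
        intro m hm
        have := congrFun hfun ⟨m, Nat.lt_succ_of_le hm⟩
        simpa using this
      -- f (α+1) ≤lex f α'
      have hle : lexLe (f (α + 1)) (f α') := by
        rcases eq_or_lt_of_le (Order.add_one_le_of_lt hlt') with he | hl
        · exact Or.inl (by rw [he])
        · exact Or.inr (main (α + 1) α' hl hα'l)
      rcases hle with heq | ⟨m, hagm, hm0, hm1⟩
      · have : f α' n = true := by rw [← heq]; exact hf1
        rw [← hpt n le_rfl, hf0] at this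
        exact Bool.noConfusion this
      · rcases lt_trichotomy m n with hmn | hmn | hmn
        · have h1 : f (α + 1) m = f α m := (hag m hmn).symm
          have h2 : f α m = f α' m := hpt m hmn.le
          rw [h1, h2, hm1] at hm0
          exact Bool.noConfusion hm0
        · subst hmn
          rw [hf1] at hm0
          exact Bool.noConfusion hm0
        · have h1 : f (α + 1) n = f α' n := hagm n hmn
          rw [hf1, ← hpt n le_rfl, hf0] at h1
          exact Bool.noConfusion h1
    · -- α + 1 ≥ lam yet α < α' < lam gives α + 1 ≤ α' < lam, contradiction
      exact hα ((Order.add_one_le_of_lt hlt').trans_lt hα'l)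
  -- now build an injection from lam.ToType into Option (List Bool)
  have hinj : Function.Injective
      (fun x : lam.ToType => enc (((Ordinal.ToType.mk (o := lam)).symm x : Set.Iio lam) : Ordinal)) := by
    intro x y hxy
    set a := (Ordinal.ToType.mk (o := lam)).symm x with ha
    set b := (Ordinal.ToType.mk (o := lam)).symm y with hb
    have hax : (a : Ordinal) < lam := a.2
    have hbx : (b : Ordinal) < lam := b.2
    have hab : (a : Ordinal) = (b : Ordinal) := by
      rcases lt_trichotomy (a : Ordinal) (b : Ordinal) with hl | he | hl
      · exact absurd hxy (encinj a hax b hbx hl)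
      · exact he
      · exact absurd hxy.symm (encinj b hbx a hax hl)
    have : a = b := Subtype.ext hab
    have := congrArg (Ordinal.ToType.mk (o := lam)) this
    simpa [ha, hb] using this
  have : Countable lam.ToType := hinj.countable
  calc lam.card = Cardinal.mk lam.ToType := (Cardinal.mk_toType lam).symm
    _ ≤ Cardinal.aleph0 := Cardinal.mk_le_aleph0
end

section
/- Let F : 2^ℕ → ℕ be Borel measurable, let m be the uniform measure on 2^ℕ, and let ν be the product measure on (2^ℕ)^ℕ of countably many copies of m. Then for ν-almost every sequence (f_j)_{j∈ℕ}, the union ⋃_j C_{f̄_j F(f_j)} has m-measure 1. -/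
open MeasureTheory

/-- The cylinder of all infinite binary sequences extending the finite string `s`. -/
def cylL (s : List Bool) : Set (ℕ → Bool) := {h | ∀ m < s.length, h m = s.getD m false}

/-- The set of `f` that "cover" `x`: `f` agrees with `x` on the first `F f` bits. -/
def covSet (F : (ℕ → Bool) → ℕ) (x : ℕ → Bool) : Set (ℕ → Bool) :=
  {f | ∀ k < F f, x k = f k}

lemma measurableSet_cylL (s : List Bool) : MeasurableSet (cylL s) := by
  have : cylL s = ⋂ (k : ℕ) (_ : k < s.length),
      (fun h : ℕ → Bool => h k) ⁻¹' {s.getD k false} := by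
    ext h; simp [cylL]
  rw [this]
  exact MeasurableSet.iInter fun k => MeasurableSet.iInter fun _ =>
    (measurable_pi_apply k) (measurableSet_singleton _)

lemma measurableSet_covSet (F : (ℕ → Bool) → ℕ) (hF : Measurable F) (x : ℕ → Bool) :
    MeasurableSet (covSet F x) := by
  have : covSet F x = ⋃ n : ℕ, (F ⁻¹' {n}) ∩
      ⋂ (k : ℕ) (_ : k < n), (fun f : ℕ → Bool => f k) ⁻¹' {x k} := by
    ext f
    simp only [covSet, Set.mem_setOf_eq, Set.mem_iUnion, Set.mem_inter_iff,
      Set.mem_preimage, Set.mem_singleton_iff, Set.mem_iInter]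
    constructor
    · intro h; exact ⟨F f, rfl, fun k hk => (h k hk).symm⟩
    · rintro ⟨n, rfl, h⟩; exact fun k hk => (h k hk).symm
  rw [this]
  exact MeasurableSet.iUnion fun n =>
    (hF (measurableSet_singleton n)).inter
      (MeasurableSet.iInter fun k => MeasurableSet.iInter fun _ =>
        (measurable_pi_apply k) (measurableSet_singleton _))

lemma list_mem_cyl (x : ℕ → Bool) (n : ℕ) (f : ℕ → Bool)
    (h : ∀ k < n, f k = x k) : f ∈ cylL (List.ofFn fun i : Fin n => x i) := by
  intro k hk
  simp only [List.length_ofFn] at hk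
  rw [List.getD_eq_getElem _ _ (by simpa using hk), List.getElem_ofFn]
  exact h k hk

lemma getD_ofFn (x : ℕ → Bool) (n k : ℕ) (hk : k < n) :
    (List.ofFn fun i : Fin n => x i).getD k false = x k := by
  rw [List.getD_eq_getElem _ _ (by simpa using hk), List.getElem_ofFn]

/-- For `m`-a.e. `x`, the covering set has positive measure. -/
lemma ae_cov_pos (F : (ℕ → Bool) → ℕ) (hF : Measurable F)
    (m : Measure (ℕ → Bool)) [IsProbabilityMeasure m] :
    m {x | m (covSet F x) = 0} = 0 := by
  set T : Set (ℕ → Bool) :=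
    {x | ∀ n : ℕ, m (cylL (List.ofFn fun i : Fin n => x i) ∩ {f | F f ≤ n}) = 0} with hT
  have hsub : {x | m (covSet F x) = 0} ⊆ T := by
    intro x hx n
    refine measure_mono_null ?_ hx
    rintro f ⟨hf1, hf2⟩
    intro k hk
    have hkn : k < n := lt_of_lt_of_le hk hf2
    have := hf1 k (by simpa using hkn)
    rw [this, getD_ofFn x n k hkn]
  refine measure_mono_null hsub ?_
  -- m T ≤ m {f | n < F f} for every n
  have hbound : ∀ n : ℕ, m T ≤ m {f | n < F f} := by
    intro n
    have hTsplit : T ⊆ (T ∩ {f | F f ≤ n}) ∪ {f | n < F f} := by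
      intro x hx
      by_cases h : F x ≤ n
      · exact Or.inl ⟨hx, h⟩
      · exact Or.inr (lt_of_not_ge h)
    have hnull : m (T ∩ {f | F f ≤ n}) = 0 := by
      have hsub2 : T ∩ {f | F f ≤ n} ⊆
          ⋃ s ∈ {s : List Bool | m (cylL s ∩ {f | F f ≤ n}) = 0},
            (cylL s ∩ {f | F f ≤ n}) := by
        rintro x ⟨hx, hxF⟩
        refine Set.mem_biUnion (hx n) ⟨?_, hxF⟩
        intro k hk
        simp only [List.length_ofFn] at hk
        rw [getD_ofFn x n k hk]
      refine measure_mono_null hsub2 ?_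
      exact (measure_biUnion_null_iff (Set.to_countable _)).mpr fun s hs => hs
    calc m T ≤ m ((T ∩ {f | F f ≤ n}) ∪ {f | n < F f}) := measure_mono hTsplit
      _ ≤ m (T ∩ {f | F f ≤ n}) + m {f | n < F f} := measure_union_le _ _
      _ = m {f | n < F f} := by rw [hnull, zero_add]
  have hanti : Antitone (fun n : ℕ => {f : ℕ → Bool | n < F f}) := by
    intro a b hab f hf
    exact lt_of_le_of_lt hab hf
  have hempty : (⋂ n : ℕ, {f : ℕ → Bool | n < F f}) = ∅ := by
    ext f
    simp only [Set.mem_iInter, Set.mem_setOf_eq, Set.mem_empty_iff_false, iff_false, not_forall,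
      not_lt]
    exact ⟨F f, le_refl _⟩
  have htend : Filter.Tendsto (fun n : ℕ => m {f : ℕ → Bool | n < F f}) Filter.atTop (nhds 0) := by
    have := tendsto_measure_iInter_atTop (μ := m) (s := fun n : ℕ => {f : ℕ → Bool | n < F f})
      (fun n => (hF measurableSet_Ioi).nullMeasurableSet) hanti
      ⟨0, measure_ne_top m _⟩
    rwa [hempty, measure_empty] at this
  exact le_antisymm (ge_of_tendsto' htend hbound) zero_le

/-- For a Borel `F : 2^ℕ → ℕ`, almost every sequence `(f_j)` (with respect to the
product `ν` of countably many copies of the uniform measure `m`) suffices for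
`F`: the union of the cylinders `C_{f̄_j F(f_j)}` has full measure. -/
theorem ae_sequence_suffices (F : (ℕ → Bool) → ℕ) (hF : Measurable F)
    (m : Measure (ℕ → Bool))
    (hm : ∀ s : List Bool, m (cylL s) = ((2 : ENNReal) ^ s.length)⁻¹)
    (ν : Measure (ℕ → ℕ → Bool))
    (hν : ∀ (n : ℕ) (A : Fin n → Set (ℕ → Bool)), (∀ i, MeasurableSet (A i)) →
      ν {x | ∀ i : Fin n, x i ∈ A i} = ∏ i, m (A i)) :
    ν {fs : ℕ → ℕ → Bool |
        m (⋃ j : ℕ, {h : ℕ → Bool | ∀ k < F (fs j), h k = fs j k}) = 1} = 1 := by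
  -- probability measures
  haveI hmP : IsProbabilityMeasure m := by
    constructor
    have h0 : cylL [] = Set.univ := by
      ext h; simp [cylL]
    have := hm []
    rw [h0] at this
    simpa using this
  haveI hνP : IsProbabilityMeasure ν := by
    constructor
    have := hν 0 (fun i => ∅) (fun i => i.elim0)
    simpa using this
  -- the bad set
  set Bad : Set ((ℕ → ℕ → Bool) × (ℕ → Bool)) :=
    {p | ∀ j : ℕ, ¬ (∀ k < F (p.1 j), p.2 k = p.1 j k)} with hBad
  have hBadMeas : MeasurableSet Bad := by
    have hrw : Bad = ⋂ j : ℕ, (⋃ n : ℕ,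
        {p : (ℕ → ℕ → Bool) × (ℕ → Bool) | F (p.1 j) = n} ∩
        ⋂ (k : ℕ) (_ : k < n),
          {p : (ℕ → ℕ → Bool) × (ℕ → Bool) | p.2 k = p.1 j k})ᶜ := by
      ext p
      simp only [hBad, Set.mem_setOf_eq, Set.mem_iInter, Set.mem_compl_iff, Set.mem_iUnion,
        Set.mem_inter_iff]
      constructor
      · rintro h j ⟨n, hn, hk⟩
        exact h j fun k hkn => hk k (hn ▸ hkn)
      · intro h j hj
        exact h j ⟨F (p.1 j), rfl, fun k hk => hj k hk⟩
    rw [hrw]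
    refine MeasurableSet.iInter fun j => (MeasurableSet.iUnion fun n => ?_).compl
    refine MeasurableSet.inter ?_ ?_
    · exact (by fun_prop : Measurable fun p : (ℕ → ℕ → Bool) × (ℕ → Bool) => F (p.1 j))
        (measurableSet_singleton n)
    · refine MeasurableSet.iInter fun k => MeasurableSet.iInter fun _ => ?_
      exact measurableSet_eq_fun (by fun_prop) (by fun_prop)
  -- for a.e. x, the x-section of Bad (as a set of fs) is ν-null
  have hsec : ∀ x : ℕ → Bool, m (covSet F x) ≠ 0 →
      ν {fs : ℕ → ℕ → Bool | ∀ j : ℕ, ¬ (∀ k < F (fs j), x k = fs j k)} = 0 := by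
    intro x hx
    have hSm : MeasurableSet (covSet F x) := measurableSet_covSet F hF x
    have hr : m (covSet F x)ᶜ < 1 := by
      rw [measure_compl hSm (measure_ne_top m _), measure_univ]
      exact ENNReal.sub_lt_self ENNReal.one_ne_top one_ne_zero hx
    have key : ∀ N : ℕ,
        ν {fs : ℕ → ℕ → Bool | ∀ j : ℕ, ¬ (∀ k < F (fs j), x k = fs j k)} ≤
          (m (covSet F x)ᶜ) ^ N := by
      intro N
      have h1 : ν {fs : ℕ → ℕ → Bool | ∀ i : Fin N, fs i ∈ (covSet F x)ᶜ} =
          (m (covSet F x)ᶜ) ^ N := by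
        rw [hν N (fun _ => (covSet F x)ᶜ) (fun _ => hSm.compl)]
        simp
      rw [← h1]
      refine measure_mono fun fs hfs i => ?_
      exact hfs i
    have htend : Filter.Tendsto (fun N : ℕ => (m (covSet F x)ᶜ) ^ N) Filter.atTop (nhds 0) :=
      ENNReal.tendsto_pow_atTop_nhds_zero_of_lt_one hr
    exact le_antisymm (ge_of_tendsto' htend key) zero_le
  -- (ν.prod m) Bad = 0
  have hprod : (ν.prod m) Bad = 0 := by
    rw [Measure.prod_apply_symm hBadMeas]
    have : ∀ᵐ x ∂m, ν ((fun fs => (fs, x)) ⁻¹' Bad) = 0 := by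
      have h0 := ae_cov_pos F hF m
      rw [← compl_mem_ae_iff] at h0
      filter_upwards [h0] with x hx
      exact hsec x hx
    calc ∫⁻ x, ν ((fun fs => (fs, x)) ⁻¹' Bad) ∂m = ∫⁻ _, 0 ∂m := lintegral_congr_ae this
      _ = 0 := lintegral_zero
  -- sections over fs
  rw [Measure.measure_prod_null hBadMeas] at hprod
  have : ∀ᵐ fs ∂ν,
      m (⋃ j : ℕ, {h : ℕ → Bool | ∀ k < F (fs j), h k = fs j k}) = 1 := by
    filter_upwards [hprod] with fs hfs
    simp only [Pi.zero_apply] at hfs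
    have hcompl : (⋃ j : ℕ, {h : ℕ → Bool | ∀ k < F (fs j), h k = fs j k})ᶜ =
        Prod.mk fs ⁻¹' Bad := by
      ext x
      simp [hBad, Set.mem_iUnion]
    rw [measure_congr (ae_eq_univ.mpr (by rw [hcompl]; exact hfs)), measure_univ]
  have h2 : ν {fs : ℕ → ℕ → Bool |
      m (⋃ j : ℕ, {h : ℕ → Bool | ∀ k < F (fs j), h k = fs j k}) = 1}ᶜ = 0 := by
    rw [Set.compl_setOf]; exact ae_iff.mp this
  rw [measure_congr (ae_eq_univ.mpr h2), measure_univ]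
end
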